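/- Let λ ∈ ℝⁿ, A a real n×m matrix, B a real m×n matrix, and for x in the open positive orthant of ℝⁿ set g_i(x) = λ_i + Σ_{j=1}^m A_{ij} · Π_{k=1}^n x_k^{B_{jk}}. Let F_E(x)_i = x_i + x_i·g_i(x) and F_QP(x)_i = x_i·exp(g_i(x)). If x₀ is a point of the open positive orthant with g_i(x₀) = 0 for all i (a common steady state), then the derivatives (Jacobian matrices) of F_E and F_QP at x₀ coincide; explicitly, both Jacobians have (i,k) entry δ_{ik} + x₀ᵢ·∂g_i/∂x_k(x₀). -/

import Mathlib

/-- The exponents `g_i(x) = λ_i + Σ_j A_{ij} · Π_k x_k ^ B_{jk}` of a QP system. -/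
noncomputable def QPexponent {n m : ℕ} (lam : Fin n → ℝ) (A : Matrix (Fin n) (Fin m) ℝ)
    (B : Matrix (Fin m) (Fin n) ℝ) (x : Fin n → ℝ) : Fin n → ℝ :=
  fun i => lam i + ∑ j, A i j * ∏ k, x k ^ B j k

/-- At a common steady state `x₀` (a positive point with `g(x₀) = 0`), the Jacobians of the
Euler discretization `F_E(x)_i = x_i + x_i·g_i(x)` and of the QP discretization
`F_QP(x)_i = x_i·exp(g_i(x))` coincide; explicitly, the derivative sends a direction `v` to
the vector with `i`-th component `v_i + x₀_i · (Dg_i(x₀) v)`. -/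
theorem jacobians_coincide_at_steady_state {n m : ℕ} (lam : Fin n → ℝ)
    (A : Matrix (Fin n) (Fin m) ℝ) (B : Matrix (Fin m) (Fin n) ℝ)
    (FE FQP : (Fin n → ℝ) → Fin n → ℝ)
    (hFE : FE = fun x i => x i + x i * QPexponent lam A B x i)
    (hFQP : FQP = fun x i => x i * Real.exp (QPexponent lam A B x i))
    (x0 : Fin n → ℝ) (hx0 : ∀ i, 0 < x0 i)
    (hss : ∀ i, QPexponent lam A B x0 i = 0) :
    fderiv ℝ FE x0 = fderiv ℝ FQP x0 ∧
    (∀ v : Fin n → ℝ, fderiv ℝ FE x0 v =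
      fun i => v i + x0 i * fderiv ℝ (fun x => QPexponent lam A B x i) x0 v) := by
  -- differentiability of g_i
  have hg : ∀ i, HasFDerivAt (fun x => QPexponent lam A B x i)
      (fderiv ℝ (fun x => QPexponent lam A B x i) x0) x0 := by
    intro i
    apply DifferentiableAt.hasFDerivAt
    unfold QPexponent
    apply (differentiableAt_const _).add
    apply DifferentiableAt.fun_sum
    intro j _
    apply (differentiableAt_const _).mul
    have : ∀ s : Finset (Fin n),
        DifferentiableAt ℝ (fun y : Fin n → ℝ => ∏ k ∈ s, y k ^ B j k) x0 := by
      intro s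
      induction s using Finset.induction with
      | empty => simp
      | insert _ _ hk ih =>
        simp only [Finset.prod_insert hk]
        exact (((ContinuousLinearMap.proj _ :
          (Fin n → ℝ) →L[ℝ] ℝ).differentiableAt).rpow_const
          (Or.inl (hx0 _).ne')).mul ih
    exact this Finset.univ
  set Dg : Fin n → ((Fin n → ℝ) →L[ℝ] ℝ) :=
    fun i => fderiv ℝ (fun x => QPexponent lam A B x i) x0 with hDg
  set L : Fin n → ((Fin n → ℝ) →L[ℝ] ℝ) :=
    fun i => (ContinuousLinearMap.proj i : (Fin n → ℝ) →L[ℝ] ℝ) + x0 i • Dg i with hL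
  have hproj : ∀ i : Fin n, HasFDerivAt (fun x : Fin n → ℝ => x i)
      (ContinuousLinearMap.proj i : (Fin n → ℝ) →L[ℝ] ℝ) x0 :=
    fun i => (ContinuousLinearMap.proj i : (Fin n → ℝ) →L[ℝ] ℝ).hasFDerivAt
  have hE : HasFDerivAt FE (ContinuousLinearMap.pi L) x0 := by
    rw [hFE]
    apply hasFDerivAt_pi.2
    intro i
    have h := (hproj i).fun_add ((hproj i).fun_mul (hg i))
    convert h using 1
    ext v
    simp [hL, hDg, hss i, mul_comm]
  have hQ : HasFDerivAt FQP (ContinuousLinearMap.pi L) x0 := by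
    rw [hFQP]
    apply hasFDerivAt_pi.2
    intro i
    have h := (hproj i).fun_mul (hg i).exp
    convert h using 1
    ext v
    simp [hL, hDg, hss i, mul_comm]
    ext v
    simp [hL, hDg, hss i, add_comm]
  constructor
  · rw [hE.fderiv, hQ.fderiv]
  · intro v
    rw [hE.fderiv]
    funext i
    simp [ContinuousLinearMap.pi_apply, hL, hDg]
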